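/- arXiv:2106.04117 — 6 statements merged into one kernel-verified Lean document; each statement's English description precedes it below -/
import Mathlib

section
/- Fix a finite state space S partitioned into layers S₀,…,S_L with S₀ = {s₀} and S_L = {s_L}, a finite action set A, and a layered transition function P (so P(·|s,a) is supported on the next layer). For any stochastic policy π, any loss function ℓ̊ : S × A → ℝ, define the state-action value Q^π(s,a) = ℓ̊(s,a) + Σ_{s'} P(s'|s,a) V^π(s') and V^π(s) = Σ_a π(a|s) Q^π(s,a), with V^π(s_L) = 0. Define g(s,a) = Q^π(s,a) − V^π(s) − ℓ̊(s,a). Then for every policy π', the inner product ⟨q^{P,π'}, g⟩ = Σ_{s≠s_L} Σ_a q^{P,π'}(s,a) g(s,a) equals −V^π(s₀), where q^{P,π'} is the occupancy measure of π' under P. In particular ⟨q^{P,π'}, g⟩ is independent of π'. -/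
open Finset

/-- **Loss-shifting invariance** in a layered episodic MDP.
States are partitioned into layers `S 0, …, S L` with initial state `s0 : S 0`;
`P` is a layered transition function and `pol`, `pol'` are stochastic policies.
Given the value functions `Q, V` of policy `pol` for the loss `ℓ` (defined by the
Bellman recursion with `V L = 0`), and the occupancy measure `q` of `pol'` under `P`
(given by the forward recursion, where `q k s * pol' k s a` is the probability of
visiting the pair `(s,a)`), the inner product of the occupancy measure of `pol'` with
the shifting function `g(s,a) = Q(s,a) − V(s) − ℓ(s,a)` equals `−V(s0)`;
in particular it is independent of `pol'`. -/
theorem loss_shifting_invariant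
    (L : ℕ) (S : ℕ → Type) [∀ k, Fintype (S k)] [DecidableEq (S 0)]
    (A : Type) [Fintype A]
    (P : ∀ k, S k → A → S (k + 1) → ℝ)
    (hPnn : ∀ k (s : S k) (a : A) (s' : S (k + 1)), 0 ≤ P k s a s')
    (hPsum : ∀ k (s : S k) (a : A), ∑ s' : S (k + 1), P k s a s' = 1)
    (s0 : S 0)
    (pol pol' : ∀ k, S k → A → ℝ)
    (hpolnn : ∀ k (s : S k) (a : A), 0 ≤ pol k s a)
    (hpolsum : ∀ k (s : S k), ∑ a : A, pol k s a = 1)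
    (hpol'nn : ∀ k (s : S k) (a : A), 0 ≤ pol' k s a)
    (hpol'sum : ∀ k (s : S k), ∑ a : A, pol' k s a = 1)
    (ℓ : ∀ k, S k → A → ℝ)
    (Q : ∀ k, S k → A → ℝ) (V : ∀ k, S k → ℝ)
    (hVL : ∀ s : S L, V L s = 0)
    (hQ : ∀ k, k < L → ∀ (s : S k) (a : A),
      Q k s a = ℓ k s a + ∑ s' : S (k + 1), P k s a s' * V (k + 1) s')
    (hV : ∀ k, k < L → ∀ s : S k, V k s = ∑ a : A, pol k s a * Q k s a)
    (q : ∀ k, S k → ℝ)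
    (hq0 : ∀ s : S 0, q 0 s = if s = s0 then 1 else 0)
    (hqrec : ∀ k, k < L → ∀ s' : S (k + 1),
      q (k + 1) s' = ∑ s : S k, ∑ a : A, q k s * pol' k s a * P k s a s') :
    ∑ k ∈ Finset.range L, ∑ s : S k, ∑ a : A,
        q k s * pol' k s a * (Q k s a - V k s - ℓ k s a) = - V 0 s0 := by
  have key : ∀ k ∈ Finset.range L,
      (∑ s : S k, ∑ a : A, q k s * pol' k s a * (Q k s a - V k s - ℓ k s a))
        = (∑ s' : S (k + 1), q (k + 1) s' * V (k + 1) s')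
          - ∑ s : S k, q k s * V k s := by
    intro k hk
    rw [Finset.mem_range] at hk
    have h1 : (∑ s : S k, ∑ a : A, q k s * pol' k s a * (Q k s a - V k s - ℓ k s a))
        = (∑ s : S k, ∑ a : A, ∑ s' : S (k + 1),
            q k s * pol' k s a * (P k s a s' * V (k + 1) s'))
          - ∑ s : S k, ∑ a : A, q k s * pol' k s a * V k s := by
      rw [← Finset.sum_sub_distrib]
      refine Finset.sum_congr rfl fun s _ => ?_
      rw [← Finset.sum_sub_distrib]
      refine Finset.sum_congr rfl fun a _ => ?_
      rw [hQ k hk s a, ← Finset.mul_sum]; ring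
    have h2 : (∑ s : S k, ∑ a : A, ∑ s' : S (k + 1),
            q k s * pol' k s a * (P k s a s' * V (k + 1) s'))
        = ∑ s' : S (k + 1), q (k + 1) s' * V (k + 1) s' := by
      rw [Finset.sum_congr rfl fun s _ => Finset.sum_comm, Finset.sum_comm]
      refine Finset.sum_congr rfl fun s' _ => ?_
      rw [hqrec k hk s', Finset.sum_mul]
      refine Finset.sum_congr rfl fun s _ => ?_
      rw [Finset.sum_mul]
      refine Finset.sum_congr rfl fun a _ => ?_
      ring
    have h3 : (∑ s : S k, ∑ a : A, q k s * pol' k s a * V k s)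
        = ∑ s : S k, q k s * V k s := by
      refine Finset.sum_congr rfl fun s _ => ?_
      calc ∑ a : A, q k s * pol' k s a * V k s
          = (∑ a : A, pol' k s a) * (q k s * V k s) := by
            rw [Finset.sum_mul]; exact Finset.sum_congr rfl fun a _ => by ring
        _ = q k s * V k s := by rw [hpol'sum k s, one_mul]
    rw [h1, h2, h3]
  rw [Finset.sum_congr rfl key, Finset.sum_range_sub (f := fun k => ∑ s : S k, q k s * V k s)]
  have hL : (∑ s : S L, q L s * V L s) = 0 := by
    simp [hVL]
  have h0 : (∑ s : S 0, q 0 s * V 0 s) = V 0 s0 := by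
    simp [hq0, Finset.sum_ite_eq']
  rw [hL, h0, zero_sub]
end

section
/- In the setting of the importance-weighted estimator for a layered episodic MDP with known transition, the conditional variance of the shifted loss satisfies E_t[(Q̂_t(s,a) − V̂_t(s))²] ≤ 2L²(1 − π_t(a|s))/q_t(s,a) for every state-action pair (s,a), where E_t denotes expectation over the trajectory of episode t conditioned on the past. -/
open Finset

/-- A trajectory in a layered episodic MDP with `L` layers: a state in each of the
layers `0, …, L` together with an action at each of the layers `0, …, L-1`. -/
abbrev Traj (L : ℕ) (S : ℕ → Type) (A : Type) : Type :=
  ((k : Fin (L + 1)) → S k) × (Fin L → A)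

def chainMeas (S : ℕ → Type) [∀ k, Fintype (S k)] (A : Type) [Fintype A]
    (B : ∀ j : ℕ, S j → A → S (j + 1) → ℝ) (init : S 0 → ℝ) : ∀ j, S j → ℝ
  | 0 => init
  | (j + 1) => fun t => ∑ s : S j, ∑ a : A, chainMeas S A B init j s * B j s a t

lemma chain_sum (L : ℕ) (S : ℕ → Type) [∀ k, Fintype (S k)] (A : Type) [Fintype A]
    (init : S 0 → ℝ) (B : ∀ j : ℕ, S j → A → S (j + 1) → ℝ) :
    ∑ ω : Traj L S A, init (ω.1 ⟨0, Nat.succ_pos L⟩) *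
        ∏ j : Fin L, B j.1 (ω.1 ⟨j.1, Nat.lt_succ_of_lt j.2⟩) (ω.2 j)
          (ω.1 ⟨j.1 + 1, Nat.succ_lt_succ j.2⟩)
      = ∑ t : S L, chainMeas S A B init L t := by
  induction L generalizing S init B with
  | zero =>
      simp only [Fintype.sum_prod_type]
      rw [← (Fin.consEquiv fun k : Fin 1 => S ↑k).sum_comp]
      simp [chainMeas, Fintype.sum_prod_type, Fin.consEquiv]
  | succ L ih =>
      have hshift : ∀ j, chainMeas S A B init (j + 1) =
          chainMeas (fun n => S (n + 1)) A (fun j => B (j + 1))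
            (fun t => ∑ s : S 0, ∑ a : A, init s * B 0 s a t) j := by
        intro j
        induction j with
        | zero => rfl
        | succ j hj =>
            funext t
            show (∑ s : S (j + 1), ∑ a : A, chainMeas S A B init (j + 1) s * B (j + 1) s a t) = _
            rw [hj]
            rfl
      rw [show (∑ t : S (L + 1), chainMeas S A B init (L + 1) t)
            = ∑ t : S (L + 1), chainMeas (fun n => S (n + 1)) A (fun j => B (j + 1))
                (fun t => ∑ s : S 0, ∑ a : A, init s * B 0 s a t) L t from by rw [hshift]]
      rw [← ih (fun n => S (n + 1)) (fun t => ∑ s : S 0, ∑ a : A, init s * B 0 s a t)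
            (fun j => B (j + 1))]
      rw [← Equiv.sum_comp ((Equiv.prodProdProdComm (S 0) A _ _).trans
          (Equiv.prodCongr (Fin.consEquiv fun k : Fin (L + 2) => S ↑k)
            (Fin.consEquiv fun _ : Fin (L + 1) => A)))]
      rw [Fintype.sum_prod_type]
      rw [Finset.sum_comm]
      refine Finset.sum_congr rfl fun ω' _ => ?_
      rw [Fintype.sum_prod_type]
      rw [Finset.sum_mul]
      refine Finset.sum_congr rfl fun s₀ _ => ?_
      rw [Finset.sum_mul]
      refine Finset.sum_congr rfl fun a₀ _ => ?_
      rw [Fin.prod_univ_succ, ← mul_assoc]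
      rfl
set_option maxHeartbeats 1000000 in
/-- **Conditional variance bound for the shifted losses.**
In a layered episodic MDP with known transition `P`, policy `pol`, occupancy measure
`q` (with `q k s a > 0`), the trajectory of an episode is drawn from the path measure
`w` induced by `pol` and `P`.  For each trajectory `ω`, `Ind ω` is its visitation
indicator, `lhat ω` the importance-weighted loss estimator built from losses
`ℓ ∈ [0,1]`, and `Qhat ω, Vhat ω` the corresponding estimated value functions of `pol`.
Then `E_t[(Qhat(s,a) − Vhat(s))²] ≤ 2 L² (1 − pol(a|s)) / q(s,a)`. -/
theorem shifted_loss_variance_bound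
    (L : ℕ) (S : ℕ → Type) [∀ k, Fintype (S k)] [∀ k, DecidableEq (S k)]
    (A : Type) [Fintype A] [DecidableEq A]
    (P : ∀ k, S k → A → S (k + 1) → ℝ)
    (hPnn : ∀ k (s : S k) (a : A) (s' : S (k + 1)), 0 ≤ P k s a s')
    (hPsum : ∀ k (s : S k) (a : A), ∑ s' : S (k + 1), P k s a s' = 1)
    (s0 : S 0)
    (pol : ∀ k, S k → A → ℝ)
    (hpolnn : ∀ k (s : S k) (a : A), 0 ≤ pol k s a)
    (hpolsum : ∀ k (s : S k), ∑ a : A, pol k s a = 1)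
    (q : ∀ k, S k → A → ℝ)
    (hq0 : ∀ (s : S 0) (a : A), q 0 s a = (if s = s0 then 1 else 0) * pol 0 s a)
    (hqrec : ∀ k, k < L → ∀ (s' : S (k + 1)) (a' : A),
      q (k + 1) s' a' = pol (k + 1) s' a' * ∑ s : S k, ∑ a : A, q k s a * P k s a s')
    (hqpos : ∀ k, k < L → ∀ (s : S k) (a : A), 0 < q k s a)
    (w : Traj L S A → ℝ)
    (hw : ∀ ω : Traj L S A,
      w ω = (if ω.1 ⟨0, Nat.succ_pos L⟩ = s0 then (1 : ℝ) else 0) *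
        ∏ k : Fin L,
          pol k.1 (ω.1 ⟨k.1, Nat.lt_succ_of_lt k.2⟩) (ω.2 k) *
            P k.1 (ω.1 ⟨k.1, Nat.lt_succ_of_lt k.2⟩) (ω.2 k)
              (ω.1 ⟨k.1 + 1, Nat.succ_lt_succ k.2⟩))
    (Ind : Traj L S A → ∀ k, S k → A → ℝ)
    (hInd : ∀ (ω : Traj L S A) (k : ℕ) (hk : k < L) (s : S k) (a : A),
      Ind ω k s a =
        if ω.1 ⟨k, Nat.lt_succ_of_lt hk⟩ = s ∧ ω.2 ⟨k, hk⟩ = a then 1 else 0)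
    (ℓ : ∀ k, S k → A → ℝ)
    (hℓ : ∀ k (s : S k) (a : A), ℓ k s a ∈ Set.Icc (0 : ℝ) 1)
    (lhat : Traj L S A → ∀ k, S k → A → ℝ)
    (hlhat : ∀ (ω : Traj L S A) k (s : S k) (a : A),
      lhat ω k s a = ℓ k s a * Ind ω k s a / q k s a)
    (Qhat : Traj L S A → ∀ k, S k → A → ℝ) (Vhat : Traj L S A → ∀ k, S k → ℝ)
    (hVhatL : ∀ (ω : Traj L S A) (s : S L), Vhat ω L s = 0)
    (hQhat : ∀ (ω : Traj L S A) k, k < L → ∀ (s : S k) (a : A),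
      Qhat ω k s a = lhat ω k s a + ∑ s' : S (k + 1), P k s a s' * Vhat ω (k + 1) s')
    (hVhat : ∀ (ω : Traj L S A) k, k < L → ∀ s : S k,
      Vhat ω k s = ∑ a : A, pol k s a * Qhat ω k s a)
    (k : ℕ) (hk : k < L) (s : S k) (a : A) :
    ∑ ω : Traj L S A, w ω * (Qhat ω k s a - Vhat ω k s) ^ 2
      ≤ 2 * (L : ℝ) ^ 2 * (1 - pol k s a) / q k s a := by
  classical
  have hpol_le_one : ∀ m (t : S m) (b : A), pol m t b ≤ 1 := by
    intro m t b
    have h := hpolsum m t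
    have h2 : ∀ c ∈ (univ : Finset A), 0 ≤ pol m t c := fun c _ => hpolnn m t c
    calc pol m t b ≤ ∑ c : A, pol m t c := Finset.single_le_sum h2 (mem_univ b)
    _ = 1 := h
  set init : S 0 → ℝ := fun t => if t = s0 then 1 else 0 with hinit
  set B0 : ∀ j : ℕ, S j → A → S (j + 1) → ℝ := fun j t b u => pol j t b * P j t b u with hB0
  set μ : ∀ j, S j → ℝ := chainMeas S A B0 init with hμ
  have hμsucc : ∀ j (t : S (j + 1)),
      μ (j + 1) t = ∑ x : S j, ∑ b : A, μ j x * (pol j x b * P j x b t) := fun j t => rfl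
  have hμq : ∀ j, j ≤ L → ∀ (t : S j) (b : A), q j t b = μ j t * pol j t b := by
    intro j
    induction j with
    | zero =>
        intro _ t b
        rw [hq0 t b]
        rfl
    | succ j hj =>
        intro hjL t b
        rw [hqrec j (by omega) t b, hμsucc j t, Finset.sum_mul, Finset.mul_sum]
        refine Finset.sum_congr rfl fun x _ => ?_
        rw [Finset.sum_mul, Finset.mul_sum]
        refine Finset.sum_congr rfl fun c _ => ?_
        rw [hj (by omega) x c]; ring
  -- the marginal of the path measure: expectation of the visitation indicator
  have hmarg : ∀ m, m < L → ∀ (t : S m) (b : A),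
      ∑ ω : Traj L S A, w ω * Ind ω m t b = q m t b := by
    intro m hm t b
    set Bm : ∀ j : ℕ, S j → A → S (j + 1) → ℝ := fun j x c u =>
      (if h : j = m then (if (h ▸ x : S m) = t ∧ c = b then 1 else 0) else 1) *
        (pol j x c * P j x c u) with hBm
    have step1 : ∑ ω : Traj L S A, w ω * Ind ω m t b
        = ∑ ω : Traj L S A, init (ω.1 ⟨0, Nat.succ_pos L⟩) *
            ∏ j : Fin L, Bm j.1 (ω.1 ⟨j.1, Nat.lt_succ_of_lt j.2⟩) (ω.2 j)
              (ω.1 ⟨j.1 + 1, Nat.succ_lt_succ j.2⟩) := by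
      refine Finset.sum_congr rfl fun ω _ => ?_
      rw [hw ω, hInd ω m hm t b]
      have hprod : ∏ j : Fin L, Bm j.1 (ω.1 ⟨j.1, Nat.lt_succ_of_lt j.2⟩) (ω.2 j)
              (ω.1 ⟨j.1 + 1, Nat.succ_lt_succ j.2⟩)
          = (if ω.1 ⟨m, Nat.lt_succ_of_lt hm⟩ = t ∧ ω.2 ⟨m, hm⟩ = b then 1 else 0) *
            ∏ j : Fin L, pol j.1 (ω.1 ⟨j.1, Nat.lt_succ_of_lt j.2⟩) (ω.2 j) *
              P j.1 (ω.1 ⟨j.1, Nat.lt_succ_of_lt j.2⟩) (ω.2 j)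
                (ω.1 ⟨j.1 + 1, Nat.succ_lt_succ j.2⟩) := by
        simp only [hBm]
        rw [Finset.prod_mul_distrib]
        congr 1
        refine (Finset.prod_eq_single (⟨m, hm⟩ : Fin L) (fun j _ hj => ?_)
          (fun h => absurd (mem_univ _) h)).trans ?_
        · rw [dif_neg (show ¬((j : ℕ) = m) from fun hjm => hj (Fin.ext hjm))]
        · rw [dif_pos (show ((⟨m, hm⟩ : Fin L) : ℕ) = m from rfl)]
      rw [hprod]
      simp only [hinit]
      ring
    rw [step1, chain_sum L S A init Bm]
    -- the modified chain measure agrees with `μ` up to layer `m`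
    have hagree : ∀ j, j ≤ m → ∀ x : S j, chainMeas S A Bm init j x = μ j x := by
      intro j
      induction j with
      | zero => intro _ x; rfl
      | succ j hj =>
          intro hjm x
          show (∑ y : S j, ∑ c : A, chainMeas S A Bm init j y * Bm j y c x) = μ (j + 1) x
          rw [hμsucc j x]
          refine Finset.sum_congr rfl fun y _ => Finset.sum_congr rfl fun c _ => ?_
          rw [hj (by omega) y]
          simp only [hBm]
          rw [dif_neg (by omega : j ≠ m)]
          ring
    have hstep : ∑ u : S (m + 1), chainMeas S A Bm init (m + 1) u = q m t b := by
      have key : ∀ u : S (m + 1), chainMeas S A Bm init (m + 1) u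
          = ∑ y : S m, ∑ c : A, μ m y *
              ((if y = t ∧ c = b then 1 else 0) * (pol m y c * P m y c u)) := by
        intro u
        show (∑ y : S m, ∑ c : A, chainMeas S A Bm init m y * Bm m y c u) = _
        refine Finset.sum_congr rfl fun y _ => Finset.sum_congr rfl fun c _ => ?_
        rw [hagree m le_rfl y]
        simp only [hBm]
        rw [dif_pos trivial]
      rw [Finset.sum_congr rfl fun u _ => key u, Finset.sum_comm, hμq m (by omega) t b]
      rw [Finset.sum_eq_single t
        (fun y _ hy => Finset.sum_eq_zero fun u _ => Finset.sum_eq_zero fun c _ => by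
          simp [hy])
        (fun h => absurd (mem_univ _) h)]
      rw [Finset.sum_comm]
      rw [Finset.sum_eq_single b
        (fun c _ hc => Finset.sum_eq_zero fun u _ => by simp [hc])
        (fun h => absurd (mem_univ _) h)]
      have key2 : ∀ u : S (m + 1), μ m t *
          ((if t = t ∧ b = b then 1 else 0) * (pol m t b * P m t b u))
          = μ m t * pol m t b * P m t b u := by
        intro u
        rw [if_pos ⟨rfl, rfl⟩]; ring
      rw [Finset.sum_congr rfl fun u _ => key2 u, ← Finset.mul_sum, hPsum m t b, mul_one]
    have hconst : ∀ j, m + 1 ≤ j → j ≤ L →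
        ∑ u : S j, chainMeas S A Bm init j u = q m t b := by
      intro j
      induction j with
      | zero => omega
      | succ j hj =>
          intro h1 h2
          rcases Nat.lt_or_ge m j with hmj | hmj
          · have hrec : ∑ u : S (j + 1), chainMeas S A Bm init (j + 1) u
                = ∑ y : S j, chainMeas S A Bm init j y := by
              show (∑ u : S (j + 1), ∑ y : S j, ∑ c : A,
                  chainMeas S A Bm init j y * Bm j y c u) = _
              rw [Finset.sum_comm]
              refine Finset.sum_congr rfl fun y _ => ?_
              rw [Finset.sum_comm]
              have key3 : ∀ c : A, ∑ u : S (j + 1), chainMeas S A Bm init j y * Bm j y c u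
                  = chainMeas S A Bm init j y * pol j y c := by
                intro c
                have key4 : ∀ u : S (j + 1), chainMeas S A Bm init j y * Bm j y c u
                    = chainMeas S A Bm init j y * pol j y c * P j y c u := by
                  intro u
                  simp only [hBm]
                  rw [dif_neg (by omega : j ≠ m)]
                  ring
                rw [Finset.sum_congr rfl fun u _ => key4 u, ← Finset.mul_sum, hPsum j y c, mul_one]
              rw [Finset.sum_congr rfl fun c _ => key3 c, ← Finset.mul_sum, hpolsum j y,
                mul_one]
            rw [hrec, hj (by omega) (by omega)]
          · have hjm : j = m := by omega
            subst hjm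
            exact hstep
    exact hconst L (by omega) le_rfl
  -- nonnegativity facts
  have hwnn : ∀ ω : Traj L S A, 0 ≤ w ω := by
    intro ω
    rw [hw ω]
    refine mul_nonneg ?_ (Finset.prod_nonneg fun j _ => mul_nonneg (hpolnn _ _ _) (hPnn _ _ _ _))
    split_ifs <;> norm_num
  have hIndnn : ∀ (ω : Traj L S A) m (hm : m < L) (t : S m) b, 0 ≤ Ind ω m t b := by
    intro ω m hm t b; rw [hInd ω m hm t b]; split_ifs <;> norm_num
  have hIndle : ∀ (ω : Traj L S A) m (hm : m < L) (t : S m) b, Ind ω m t b ≤ 1 := by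
    intro ω m hm t b; rw [hInd ω m hm t b]; split_ifs <;> norm_num
  have hlnn : ∀ (ω : Traj L S A) m (hm : m < L) (t : S m) b, 0 ≤ lhat ω m t b := by
    intro ω m hm t b
    rw [hlhat]
    exact div_nonneg (mul_nonneg (hℓ m t b).1 (hIndnn ω m hm t b)) (hqpos m hm t b).le
  have hμnn : ∀ j (t : S j), 0 ≤ μ j t := by
    intro j
    induction j with
    | zero =>
        intro t
        have h0 : μ 0 t = if t = s0 then 1 else 0 := rfl
        rw [h0]; split_ifs <;> norm_num
    | succ j hj =>
        intro t
        rw [hμsucc j t]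
        exact Finset.sum_nonneg fun x _ => Finset.sum_nonneg fun c _ =>
          mul_nonneg (hj x) (mul_nonneg (hpolnn _ _ _) (hPnn _ _ _ _))
  have hVnn : ∀ d m, m + d = L → ∀ (ω : Traj L S A) (t : S m), 0 ≤ Vhat ω m t := by
    intro d
    induction d with
    | zero =>
        intro m hm ω t
        have hmL : m = L := by omega
        subst hmL
        rw [hVhatL ω t]
    | succ d hd =>
        intro m hm ω t
        rw [hVhat ω m (by omega) t]
        refine Finset.sum_nonneg fun b _ => mul_nonneg (hpolnn m t b) ?_
        rw [hQhat ω m (by omega) t b]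
        exact add_nonneg (hlnn ω m (by omega) t b) (Finset.sum_nonneg fun u _ =>
          mul_nonneg (hPnn m t b u) (hd (m + 1) (by omega) ω u))
  have hQnn : ∀ m (hm : m < L) (ω : Traj L S A) (t : S m) b, 0 ≤ Qhat ω m t b := by
    intro m hm ω t b
    rw [hQhat ω m hm t b]
    exact add_nonneg (hlnn ω m hm t b) (Finset.sum_nonneg fun u _ =>
      mul_nonneg (hPnn m t b u) (hVnn (L - (m + 1)) (m + 1) (by omega) ω u))
  have hqlhat : ∀ (ω : Traj L S A) m (hm : m < L) (t : S m) b,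
      q m t b * lhat ω m t b ≤ 1 := by
    intro ω m hm t b
    rw [hlhat, mul_comm, div_mul_cancel₀ _ (ne_of_gt (hqpos m hm t b))]
    exact mul_le_one₀ (hℓ m t b).2 (hIndnn ω m hm t b) (hIndle ω m hm t b)
  -- pointwise weighted bound on the estimated value functions
  have hVpt : ∀ d m (hm : m + d = L) (ω : Traj L S A) (u : S m → ℝ),
      (∀ t, 0 ≤ u t) → (∀ t, u t ≤ μ m t) →
      ∑ t : S m, u t * Vhat ω m t ≤ (d : ℝ) := by
    intro d
    induction d with
    | zero =>
        intro m hm ω u hu0 huμ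
        have hmL : m = L := by omega
        subst hmL
        simp [hVhatL ω]
    | succ d hd =>
        intro m hm ω u hu0 huμ
        have hmL : m < L := by omega
        have hvq : ∀ (t : S m) b, u t * pol m t b ≤ q m t b := by
          intro t b
          rw [hμq m (by omega) t b]
          exact mul_le_mul_of_nonneg_right (huμ t) (hpolnn m t b)
        have part1 : (∑ t : S m, ∑ b : A, u t * pol m t b * lhat ω m t b) ≤ 1 := by
          have hterm : ∀ (t : S m) (b : A), u t * pol m t b * lhat ω m t b
              ≤ Ind ω m t b := by
            intro t b
            calc u t * pol m t b * lhat ω m t b ≤ q m t b * lhat ω m t b :=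
                  mul_le_mul_of_nonneg_right (hvq t b) (hlnn ω m hmL t b)
              _ ≤ 1 * Ind ω m t b := by
                  rw [one_mul, hlhat, mul_comm, div_mul_cancel₀ _
                    (ne_of_gt (hqpos m hmL t b))]
                  exact mul_le_of_le_one_left (hIndnn ω m hmL t b) (hℓ m t b).2
              _ = Ind ω m t b := one_mul _
          calc (∑ t : S m, ∑ b : A, u t * pol m t b * lhat ω m t b)
              ≤ ∑ t : S m, ∑ b : A, Ind ω m t b :=
                Finset.sum_le_sum fun t _ => Finset.sum_le_sum fun b _ => hterm t b
            _ = 1 := by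
                have hrw : ∀ (t : S m) (b : A), Ind ω m t b =
                    if ω.1 ⟨m, Nat.lt_succ_of_lt hmL⟩ = t ∧ ω.2 ⟨m, hmL⟩ = b then 1 else 0 :=
                  fun t b => hInd ω m hmL t b
                rw [Finset.sum_congr rfl fun t _ => Finset.sum_congr rfl fun b _ => hrw t b]
                have h1 : ∀ t : S m, (∑ b : A, if ω.1 ⟨m, Nat.lt_succ_of_lt hmL⟩ = t ∧
                    ω.2 ⟨m, hmL⟩ = b then (1:ℝ) else 0)
                    = if ω.1 ⟨m, Nat.lt_succ_of_lt hmL⟩ = t then 1 else 0 := by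
                  intro t
                  by_cases hx : ω.1 ⟨m, Nat.lt_succ_of_lt hmL⟩ = t <;>
                    simp [hx, Finset.sum_ite_eq]
                rw [Finset.sum_congr rfl fun t _ => h1 t]
                simp [Finset.sum_ite_eq]
        have part2 : (∑ t : S m, ∑ b : A, u t * pol m t b *
            ∑ v : S (m + 1), P m t b v * Vhat ω (m + 1) v) ≤ (d : ℝ) := by
          have hswap : (∑ t : S m, ∑ b : A, u t * pol m t b *
              ∑ v : S (m + 1), P m t b v * Vhat ω (m + 1) v)
              = ∑ v : S (m + 1), (∑ t : S m, ∑ b : A, u t * pol m t b * P m t b v) *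
                  Vhat ω (m + 1) v := by
            rw [Finset.sum_congr rfl fun t (_ : t ∈ univ) => Finset.sum_congr rfl
              fun b (_ : b ∈ univ) => Finset.mul_sum (univ : Finset (S (m + 1)))
                (fun v => P m t b v * Vhat ω (m + 1) v) (u t * pol m t b)]
            rw [Finset.sum_congr rfl fun t (_ : t ∈ univ) =>
              Finset.sum_comm (s := (univ : Finset A)) (t := (univ : Finset (S (m + 1))))]
            rw [Finset.sum_comm]
            refine Finset.sum_congr rfl fun v _ => ?_
            rw [Finset.sum_mul]
            refine Finset.sum_congr rfl fun t _ => ?_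
            rw [Finset.sum_mul]
            exact Finset.sum_congr rfl fun b _ => by ring
          rw [hswap]
          refine hd (m + 1) (by omega) ω _ ?_ ?_
          · intro v
            exact Finset.sum_nonneg fun t _ => Finset.sum_nonneg fun b _ =>
              mul_nonneg (mul_nonneg (hu0 t) (hpolnn m t b)) (hPnn m t b v)
          · intro v
            have hμv : μ (m + 1) v = ∑ t : S m, ∑ b : A, q m t b * P m t b v := by
              rw [hμsucc m v]
              refine Finset.sum_congr rfl fun t _ => Finset.sum_congr rfl fun b _ => ?_
              rw [hμq m (by omega) t b]; ring
            rw [hμv]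
            exact Finset.sum_le_sum fun t _ => Finset.sum_le_sum fun b _ =>
              mul_le_mul_of_nonneg_right (hvq t b) (hPnn m t b v)
        calc ∑ t : S m, u t * Vhat ω m t
            = ∑ t : S m, ∑ b : A, u t * pol m t b * Qhat ω m t b := by
              refine Finset.sum_congr rfl fun t _ => ?_
              rw [hVhat ω m hmL t, Finset.mul_sum]
              exact Finset.sum_congr rfl fun b _ => by ring
          _ = (∑ t : S m, ∑ b : A, u t * pol m t b * lhat ω m t b)
              + ∑ t : S m, ∑ b : A, u t * pol m t b *
                  ∑ v : S (m + 1), P m t b v * Vhat ω (m + 1) v := by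
              rw [← Finset.sum_add_distrib]
              refine Finset.sum_congr rfl fun t _ => ?_
              rw [← Finset.sum_add_distrib]
              refine Finset.sum_congr rfl fun b _ => ?_
              rw [hQhat ω m hmL t b]; ring
          _ ≤ 1 + (d : ℝ) := add_le_add part1 part2
          _ = ((d + 1 : ℕ) : ℝ) := by push_cast; ring
  -- expectation bound on the estimated value functions
  have hEQgen : ∀ m (hm : m < L) (t : S m) (b : A),
      (∀ v : S (m + 1), ∑ ω : Traj L S A, w ω * Vhat ω (m + 1) v ≤ ((L - (m+1) : ℕ) : ℝ)) →
      ∑ ω : Traj L S A, w ω * Qhat ω m t b ≤ 1 + ((L - (m+1) : ℕ) : ℝ) := by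
    intro m hm t b hEVnext
    have hsplit : ∑ ω : Traj L S A, w ω * Qhat ω m t b
        = (∑ ω : Traj L S A, w ω * lhat ω m t b)
          + ∑ ω : Traj L S A, ∑ v : S (m + 1), P m t b v * (w ω * Vhat ω (m + 1) v) := by
      rw [← Finset.sum_add_distrib]
      refine Finset.sum_congr rfl fun ω _ => ?_
      rw [hQhat ω m hm t b, mul_add, Finset.mul_sum]
      congr 1
      exact Finset.sum_congr rfl fun v _ => by ring
    rw [hsplit]
    have E1 : (∑ ω : Traj L S A, w ω * lhat ω m t b) ≤ 1 := by
      have hcalc : (∑ ω : Traj L S A, w ω * lhat ω m t b)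
          = ℓ m t b / q m t b * ∑ ω : Traj L S A, w ω * Ind ω m t b := by
        rw [Finset.mul_sum]
        refine Finset.sum_congr rfl fun ω _ => ?_
        rw [hlhat]; ring
      rw [hcalc, hmarg m hm t b, div_mul_cancel₀ _ (ne_of_gt (hqpos m hm t b))]
      exact (hℓ m t b).2
    have E2 : (∑ ω : Traj L S A, ∑ v : S (m + 1), P m t b v * (w ω * Vhat ω (m + 1) v))
        ≤ ((L - (m+1) : ℕ) : ℝ) := by
      rw [Finset.sum_comm]
      calc (∑ v : S (m + 1), ∑ ω : Traj L S A, P m t b v * (w ω * Vhat ω (m + 1) v))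
          = ∑ v : S (m + 1), P m t b v * ∑ ω : Traj L S A, w ω * Vhat ω (m + 1) v := by
            exact Finset.sum_congr rfl fun v _ => by rw [Finset.mul_sum]
        _ ≤ ∑ v : S (m + 1), P m t b v * ((L - (m+1) : ℕ) : ℝ) :=
            Finset.sum_le_sum fun v _ =>
              mul_le_mul_of_nonneg_left (hEVnext v) (hPnn m t b v)
        _ = ((L - (m+1) : ℕ) : ℝ) := by rw [← Finset.sum_mul, hPsum m t b, one_mul]
    exact add_le_add E1 E2
  have hEV : ∀ d m (hm : m + d = L) (t : S m),
      ∑ ω : Traj L S A, w ω * Vhat ω m t ≤ (d : ℝ) := by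
    intro d
    induction d with
    | zero =>
        intro m hm t
        have hmL : m = L := by omega
        subst hmL
        simp [hVhatL]
    | succ d hd =>
        intro m hm t
        have hmL : m < L := by omega
        have hdL : (L - (m+1) : ℕ) = d := by omega
        have hEQm : ∀ b, ∑ ω : Traj L S A, w ω * Qhat ω m t b ≤ 1 + (d : ℝ) := by
          intro b
          have := hEQgen m hmL t b (fun v => by rw [hdL]; exact hd (m + 1) (by omega) v)
          rwa [hdL] at this
        calc ∑ ω : Traj L S A, w ω * Vhat ω m t
            = ∑ ω : Traj L S A, ∑ b : A, pol m t b * (w ω * Qhat ω m t b) := by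
              refine Finset.sum_congr rfl fun ω _ => ?_
              rw [hVhat ω m hmL t, Finset.mul_sum]
              exact Finset.sum_congr rfl fun b _ => by ring
          _ = ∑ b : A, pol m t b * ∑ ω : Traj L S A, w ω * Qhat ω m t b := by
              rw [Finset.sum_comm]
              exact Finset.sum_congr rfl fun b _ => by rw [Finset.mul_sum]
          _ ≤ ∑ b : A, pol m t b * (1 + (d : ℝ)) :=
              Finset.sum_le_sum fun b _ =>
                mul_le_mul_of_nonneg_left (hEQm b) (hpolnn m t b)
          _ = 1 + (d : ℝ) := by rw [← Finset.sum_mul, hpolsum m t, one_mul]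
          _ = ((d + 1 : ℕ) : ℝ) := by push_cast; ring
  -- specialize to the pair (k, s, a)
  have hD : 0 < q k s a := hqpos k hk s a
  have hπ1 : pol k s a ≤ 1 := hpol_le_one k s a
  have hπ0 : 0 ≤ pol k s a := hpolnn k s a
  have hLr0 : (0 : ℝ) ≤ (L : ℝ) := Nat.cast_nonneg L
  have hcast : ((L - (k+1) : ℕ) : ℝ) = (L : ℝ) - (k : ℝ) - 1 := by
    rw [Nat.cast_sub (by omega)]; push_cast; ring
  have hknn : (0 : ℝ) ≤ (k : ℝ) := Nat.cast_nonneg k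
  -- pointwise bounds at (k, s)
  have hQb : ∀ (ω : Traj L S A) b, q k s b * Qhat ω k s b ≤ (L : ℝ) := by
    intro ω b
    have h2 : q k s b * (∑ v : S (k + 1), P k s b v * Vhat ω (k + 1) v)
        ≤ ((L - (k+1) : ℕ) : ℝ) := by
      have := hVpt (L - (k+1)) (k+1) (by omega) ω
        (fun v => q k s b * P k s b v)
        (fun v => mul_nonneg (hqpos k hk s b).le (hPnn k s b v))
        (fun v => by
          have hμv : μ (k + 1) v = ∑ t : S k, ∑ c : A, q k t c * P k t c v := by
            rw [hμsucc k v]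
            refine Finset.sum_congr rfl fun t _ => Finset.sum_congr rfl fun c _ => ?_
            rw [hμq k (by omega) t c]; ring
          rw [hμv]
          have hin : q k s b * P k s b v ≤ ∑ c : A, q k s c * P k s c v :=
            Finset.single_le_sum (f := fun c => q k s c * P k s c v)
              (fun c _ => mul_nonneg (hqpos k hk s c).le (hPnn k s c v)) (mem_univ b)
          refine hin.trans (Finset.single_le_sum
            (f := fun t => ∑ c : A, q k t c * P k t c v)
            (fun t _ => Finset.sum_nonneg fun c _ =>
              mul_nonneg (hqpos k hk t c).le (hPnn k t c v)) (mem_univ s)))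
      calc q k s b * (∑ v : S (k + 1), P k s b v * Vhat ω (k + 1) v)
          = ∑ v : S (k + 1), (q k s b * P k s b v) * Vhat ω (k + 1) v := by
            rw [Finset.mul_sum]
            exact Finset.sum_congr rfl fun v _ => by ring
        _ ≤ ((L - (k+1) : ℕ) : ℝ) := this
    have h1 : q k s b * lhat ω k s b ≤ 1 := hqlhat ω k hk s b
    have hexp : q k s b * Qhat ω k s b = q k s b * lhat ω k s b
        + q k s b * (∑ v : S (k + 1), P k s b v * Vhat ω (k + 1) v) := by
      rw [hQhat ω k hk s b]; ring
    rw [hexp]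
    rw [hcast] at h2
    linarith
  have hVb : ∀ ω : Traj L S A, q k s a * Vhat ω k s ≤ (L : ℝ) := by
    intro ω
    have hqμ : q k s a ≤ μ k s := by
      calc q k s a = μ k s * pol k s a := hμq k (by omega) s a
        _ ≤ μ k s * 1 := mul_le_mul_of_nonneg_left hπ1 (hμnn k s)
        _ = μ k s := mul_one _
    have hb := hVpt (L - k) k (by omega) ω (fun t => if t = s then q k s a else 0)
      (fun t => by
        show (0:ℝ) ≤ if t = s then q k s a else 0
        split_ifs <;> simp [hD.le])
      (fun t => by
        show (if t = s then q k s a else 0) ≤ μ k t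
        split_ifs with ht
        · subst ht; exact hqμ
        · exact hμnn k t)
    have hrw : ∀ t : S k, (fun t => if t = s then q k s a else 0) t * Vhat ω k t
        = if t = s then q k s a * Vhat ω k t else 0 := by
      intro t
      by_cases ht : t = s <;> simp [ht]
    rw [Finset.sum_congr rfl fun t _ => hrw t,
      Finset.sum_ite_eq' univ s (fun t => q k s a * Vhat ω k t), if_pos (mem_univ s)] at hb
    refine hb.trans ?_
    rw [Nat.cast_sub (by omega)]
    linarith
  -- expectation bound at (k, s, ·)
  have hEQ : ∀ b, ∑ ω : Traj L S A, w ω * Qhat ω k s b ≤ (L : ℝ) := by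
    intro b
    have h := hEQgen k hk s b (fun v => hEV (L - (k+1)) (k+1) (by omega) v)
    rw [hcast] at h
    linarith
  -- pointwise inequality
  set π : ℝ := pol k s a with hπ
  set D : ℝ := q k s a with hDdef
  have hkey : ∀ ω : Traj L S A, w ω * (Qhat ω k s a - Vhat ω k s) ^ 2
      ≤ w ω * ((1 - π) ^ 2 * ((L : ℝ) / D) * Qhat ω k s a
          + ((L : ℝ) / D) * (Vhat ω k s - π * Qhat ω k s a)) := by
    intro ω
    refine mul_le_mul_of_nonneg_left ?_ (hwnn ω)
    have hX0 : 0 ≤ Qhat ω k s a := hQnn k hk ω s a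
    have hY0 : 0 ≤ Vhat ω k s - π * Qhat ω k s a := by
      have hsum : Vhat ω k s - π * Qhat ω k s a
          = ∑ b ∈ univ.erase a, pol k s b * Qhat ω k s b := by
        rw [hVhat ω k hk s, ← Finset.sum_erase_add univ _ (mem_univ a)]
        ring
      rw [hsum]
      exact Finset.sum_nonneg fun b _ => mul_nonneg (hpolnn k s b) (hQnn k hk ω s b)
    have hXle : Qhat ω k s a ≤ (L : ℝ) / D := by
      rw [le_div_iff₀ hD]
      have := hQb ω a
      linarith [this]
    have hVle : Vhat ω k s ≤ (L : ℝ) / D := by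
      rw [le_div_iff₀ hD]
      have := hVb ω
      linarith [this]
    have hYle : Vhat ω k s - π * Qhat ω k s a ≤ (L : ℝ) / D := by
      have : 0 ≤ π * Qhat ω k s a := mul_nonneg hπ0 hX0
      linarith
    have hπd : 0 ≤ 1 - π := by linarith
    have e1 : (Qhat ω k s a - Vhat ω k s) ^ 2
        ≤ ((1 - π) * Qhat ω k s a) ^ 2 + (Vhat ω k s - π * Qhat ω k s a) ^ 2 := by
      nlinarith [mul_nonneg (mul_nonneg hπd hX0) hY0]
    have hXX : Qhat ω k s a ^ 2 ≤ ((L : ℝ) / D) * Qhat ω k s a := by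
      nlinarith [hX0, hXle]
    have e2 : ((1 - π) * Qhat ω k s a) ^ 2
        ≤ (1 - π) ^ 2 * (((L : ℝ) / D) * Qhat ω k s a) := by
      calc ((1 - π) * Qhat ω k s a) ^ 2 = (1 - π) ^ 2 * Qhat ω k s a ^ 2 := by ring
        _ ≤ (1 - π) ^ 2 * (((L : ℝ) / D) * Qhat ω k s a) :=
            mul_le_mul_of_nonneg_left hXX (sq_nonneg _)
    have e3 : (Vhat ω k s - π * Qhat ω k s a) ^ 2
        ≤ ((L : ℝ) / D) * (Vhat ω k s - π * Qhat ω k s a) := by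
      nlinarith [hY0, hYle]
    linarith [e1, e2, e3]
  -- sum it up
  have hsumY : ∑ ω : Traj L S A, w ω * (Vhat ω k s - π * Qhat ω k s a)
      ≤ (1 - π) * (L : ℝ) := by
    have hrw : ∀ ω : Traj L S A, w ω * (Vhat ω k s - π * Qhat ω k s a)
        = ∑ b ∈ univ.erase a, pol k s b * (w ω * Qhat ω k s b) := by
      intro ω
      have hsum : Vhat ω k s - π * Qhat ω k s a
          = ∑ b ∈ univ.erase a, pol k s b * Qhat ω k s b := by
        rw [hVhat ω k hk s, ← Finset.sum_erase_add univ _ (mem_univ a)]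
        ring
      rw [hsum, Finset.mul_sum]
      exact Finset.sum_congr rfl fun b _ => by ring
    rw [Finset.sum_congr rfl fun ω _ => hrw ω, Finset.sum_comm]
    have herase : ∑ b ∈ univ.erase a, pol k s b = 1 - π := by
      have h1 := Finset.sum_erase_add univ (pol k s) (mem_univ a)
      have h2 := hpolsum k s
      rw [h2] at h1
      rw [hπ]
      linarith
    calc ∑ b ∈ univ.erase a, ∑ ω : Traj L S A, pol k s b * (w ω * Qhat ω k s b)
        = ∑ b ∈ univ.erase a, pol k s b * ∑ ω : Traj L S A, w ω * Qhat ω k s b := by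
          exact Finset.sum_congr rfl fun b _ => by rw [Finset.mul_sum]
      _ ≤ ∑ b ∈ univ.erase a, pol k s b * (L : ℝ) :=
          Finset.sum_le_sum fun b _ =>
            mul_le_mul_of_nonneg_left (hEQ b) (hpolnn k s b)
      _ = (1 - π) * (L : ℝ) := by rw [← Finset.sum_mul, herase]
  have hsumQ : ∑ ω : Traj L S A, w ω * Qhat ω k s a ≤ (L : ℝ) := hEQ a
  have hc1 : (0:ℝ) ≤ (1 - π) ^ 2 * ((L : ℝ) / D) :=
    mul_nonneg (sq_nonneg _) (div_nonneg hLr0 hD.le)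
  have hc2 : (0:ℝ) ≤ (L : ℝ) / D := div_nonneg hLr0 hD.le
  calc ∑ ω : Traj L S A, w ω * (Qhat ω k s a - Vhat ω k s) ^ 2
      ≤ ∑ ω : Traj L S A, w ω * ((1 - π) ^ 2 * ((L : ℝ) / D) * Qhat ω k s a
          + ((L : ℝ) / D) * (Vhat ω k s - π * Qhat ω k s a)) :=
        Finset.sum_le_sum fun ω _ => hkey ω
    _ = (1 - π) ^ 2 * ((L : ℝ) / D) * (∑ ω : Traj L S A, w ω * Qhat ω k s a)
        + ((L : ℝ) / D) * ∑ ω : Traj L S A, w ω * (Vhat ω k s - π * Qhat ω k s a) := by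
        rw [Finset.mul_sum, Finset.mul_sum, ← Finset.sum_add_distrib]
        exact Finset.sum_congr rfl fun ω _ => by ring
    _ ≤ (1 - π) ^ 2 * ((L : ℝ) / D) * (L : ℝ) + ((L : ℝ) / D) * ((1 - π) * (L : ℝ)) := by
        have hwQ0 : 0 ≤ ∑ ω : Traj L S A, w ω * Qhat ω k s a :=
          Finset.sum_nonneg fun ω _ => mul_nonneg (hwnn ω) (hQnn k hk ω s a)
        have := mul_le_mul_of_nonneg_left hsumQ hc1
        have := mul_le_mul_of_nonneg_left hsumY hc2
        linarith
    _ ≤ 2 * (L : ℝ) ^ 2 * (1 - π) / D := by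
        have hπd : 0 ≤ 1 - π := by linarith
        have hsq : (1 - π) ^ 2 ≤ 1 - π := by
          have h1 : (1 - π) ^ 2 = (1 - π) * (1 - π) := sq (1 - π)
          have h2 : (1 - π) * (1 - π) ≤ 1 * (1 - π) :=
            mul_le_mul_of_nonneg_right (by linarith) hπd
          linarith
        have hdiff : 2 * (L : ℝ) ^ 2 * (1 - π) / D
            - ((1 - π) ^ 2 * ((L : ℝ) / D) * (L : ℝ) + ((L : ℝ) / D) * ((1 - π) * (L : ℝ)))
            = ((1 - π) - (1 - π) ^ 2) * ((L : ℝ) ^ 2 / D) := by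
          field_simp
          ring
        have hnn : 0 ≤ ((1 - π) - (1 - π) ^ 2) * ((L : ℝ) ^ 2 / D) :=
          mul_nonneg (by linarith) (div_nonneg (sq_nonneg _) hD.le)
        linarith
end

section
/- Let (m_i)_{i=1}^{N+1} be nonnegative integers with m_1 = 0 satisfying m_{i+1} ≤ 2 m_i whenever m_i ≥ 1, and m_{i+1} ≤ m_i + 1 allowed otherwise (counters increase by visits), with m_{N+1} ≤ T. Then Σ_{i=1}^{N} (m_{i+1} − m_i)/max{m_i, 1} ≤ 2(2 ln T + 1). -/
open Finset

/-- Potential function for the telescoping argument. -/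
noncomputable def countPhi (n : ℕ) : ℝ :=
  2 * Real.log n + (if 1 ≤ n then 1 else 0)

lemma ratio_le_two_log {a b : ℝ} (ha : 1 ≤ a) (hab : a ≤ b) (hb : b ≤ 2 * a) :
    (b - a) / a ≤ 2 * (Real.log b - Real.log a) := by
  have ha0 : 0 < a := by linarith
  have hb0 : 0 < b := by linarith
  have hlog : 1 - a / b ≤ Real.log b - Real.log a := by
    have h := Real.log_le_sub_one_of_pos (div_pos ha0 hb0)
    rw [Real.log_div ha0.ne' hb0.ne'] at h
    linarith
  have key : (b - a) / a ≤ 2 * (b - a) / b := by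
    rw [div_le_div_iff₀ ha0 hb0]; nlinarith
  have heq : 2 * (b - a) / b = 2 * (1 - a / b) := by field_simp
  linarith

lemma term_le_phi (N T : ℕ) (m : ℕ → ℕ)
    (hmono : ∀ i, m i ≤ m (i + 1))
    (hdouble : ∀ i, 1 ≤ i → i ≤ N → 1 ≤ m i → m (i + 1) ≤ 2 * m i)
    (hzero : ∀ i, 1 ≤ i → i ≤ N → m i = 0 → m (i + 1) ≤ 1)
    (i : ℕ) (hi1 : 1 ≤ i) (hiN : i ≤ N) :
    ((m (i + 1) : ℝ) - (m i : ℝ)) / max (m i : ℝ) 1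
      ≤ countPhi (m (i + 1)) - countPhi (m i) := by
  unfold countPhi
  rcases Nat.eq_zero_or_pos (m i) with h0 | hpos
  · have hb := hzero i hi1 hiN h0
    interval_cases h : m (i + 1) <;> simp [h0] <;> norm_num
  · have h1le : 1 ≤ m (i + 1) := le_trans hpos (hmono i)
    have hmax : max (m i : ℝ) 1 = (m i : ℝ) := by
      apply max_eq_left; exact_mod_cast hpos
    rw [hmax]
    have hpos' : 1 ≤ m i := hpos
    rw [if_pos h1le, if_pos hpos']
    have hab : (m i : ℝ) ≤ (m (i + 1) : ℝ) := by exact_mod_cast hmono i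
    have hb : (m (i + 1) : ℝ) ≤ 2 * (m i : ℝ) := by
      exact_mod_cast hdouble i hi1 hiN hpos
    have ha : (1 : ℝ) ≤ (m i : ℝ) := by exact_mod_cast hpos
    have := ratio_le_two_log ha hab hb
    linarith

/-- Counter-increment summation bound: with `m 1 = 0`, `m` nondecreasing,
`m (i+1) ≤ 2 m i` whenever `m i ≥ 1`, `m (i+1) ≤ 1` whenever `m i = 0`
(for `1 ≤ i ≤ N`), and `m (N+1) ≤ T`, we have
`Σ_{i=1}^{N} (m_{i+1} − m_i)/max{m_i,1} ≤ 2 (2 ln T + 1)`. -/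
theorem inverse_count_sum_bound
    (N T : ℕ) (m : ℕ → ℕ)
    (h1 : m 1 = 0)
    (hmono : ∀ i, m i ≤ m (i + 1))
    (hdouble : ∀ i, 1 ≤ i → i ≤ N → 1 ≤ m i → m (i + 1) ≤ 2 * m i)
    (hzero : ∀ i, 1 ≤ i → i ≤ N → m i = 0 → m (i + 1) ≤ 1)
    (hT : m (N + 1) ≤ T) :
    ∑ i ∈ Finset.Icc 1 N, ((m (i + 1) : ℝ) - (m i : ℝ)) / max (m i : ℝ) 1
      ≤ 2 * (2 * Real.log T + 1) := by
  have hlogT : 0 ≤ Real.log T := by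
    rcases Nat.eq_zero_or_pos T with h | h
    · simp [h]
    · exact Real.log_natCast_nonneg T
  have step1 : ∑ i ∈ Finset.Icc 1 N, ((m (i + 1) : ℝ) - (m i : ℝ)) / max (m i : ℝ) 1
      ≤ ∑ i ∈ Finset.Icc 1 N, (countPhi (m (i + 1)) - countPhi (m i)) := by
    apply Finset.sum_le_sum
    intro i hi
    rw [Finset.mem_Icc] at hi
    exact term_le_phi N T m hmono hdouble hzero i hi.1 hi.2
  have tele : ∀ n : ℕ, ∑ i ∈ Finset.Icc 1 n, (countPhi (m (i + 1)) - countPhi (m i))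
      = countPhi (m (n + 1)) - countPhi (m 1) := by
    intro n
    induction n with
    | zero => simp
    | succ k ih => rw [Finset.sum_Icc_succ_top (by omega), ih]; ring
  have hphi1 : countPhi (m 1) = 0 := by simp [countPhi, h1]
  have hend : countPhi (m (N + 1)) ≤ 2 * Real.log T + 1 := by
    unfold countPhi
    have hlogle : Real.log (m (N + 1)) ≤ Real.log T := by
      rcases Nat.eq_zero_or_pos (m (N + 1)) with h | h
      · simp [h, hlogT]
      · apply Real.log_le_log (by exact_mod_cast h) (by exact_mod_cast hT)
    split <;> linarith
  calc ∑ i ∈ Finset.Icc 1 N, ((m (i + 1) : ℝ) - (m i : ℝ)) / max (m i : ℝ) 1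
      ≤ countPhi (m (N + 1)) - countPhi (m 1) := by rw [← tele N]; exact step1
    _ ≤ 2 * Real.log T + 1 := by rw [hphi1]; linarith
    _ ≤ 2 * (2 * Real.log T + 1) := by linarith
end

section
/- Let (m_i)_{i=1}^{N+1} be nonnegative integers with m_1 = 0, m_{i+1} ≤ 2 m_i whenever m_i ≥ 1, and m_{N+1} ≤ T. Then Σ_{i=1}^{N} (m_{i+1} − m_i)/√(max{m_i, 1}) ≤ 2(2√(m_{N+1}) + 1) ≤ 2(2√T + 1). -/
open Finset

lemma telescope_Icc (f : ℕ → ℝ) (N : ℕ) :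
    ∑ i ∈ Finset.Icc 1 N, (f (i + 1) - f i) = f (N + 1) - f 1 := by
  induction N with
  | zero => simp
  | succ n ih =>
    rw [Finset.sum_Icc_succ_top (by omega : 1 ≤ n + 1), ih]
    ring

/-- Square-root counter summation bound: with `m 1 = 0`, `m` nondecreasing,
`m (i+1) ≤ 2 m i` whenever `m i ≥ 1`, `m (i+1) ≤ 1` whenever `m i = 0`
(for `1 ≤ i ≤ N`), and `m (N+1) ≤ T`, we have
`Σ_{i=1}^{N} (m_{i+1} − m_i)/√(max{m_i,1}) ≤ 2(2√(m_{N+1}) + 1) ≤ 2(2√T + 1)`. -/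
theorem sqrt_count_sum_bound
    (N T : ℕ) (m : ℕ → ℕ)
    (h1 : m 1 = 0)
    (hmono : ∀ i, m i ≤ m (i + 1))
    (hdouble : ∀ i, 1 ≤ i → i ≤ N → 1 ≤ m i → m (i + 1) ≤ 2 * m i)
    (hzero : ∀ i, 1 ≤ i → i ≤ N → m i = 0 → m (i + 1) ≤ 1)
    (hT : m (N + 1) ≤ T) :
    (∑ i ∈ Finset.Icc 1 N, ((m (i + 1) : ℝ) - (m i : ℝ)) / Real.sqrt (max (m i : ℝ) 1)
        ≤ 2 * (2 * Real.sqrt ((m (N + 1) : ℝ)) + 1))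
      ∧ 2 * (2 * Real.sqrt ((m (N + 1) : ℝ)) + 1) ≤ 2 * (2 * Real.sqrt (T : ℝ) + 1) := by
  constructor
  · have key : ∀ i ∈ Finset.Icc 1 N,
        ((m (i + 1) : ℝ) - (m i : ℝ)) / Real.sqrt (max (m i : ℝ) 1)
          ≤ 4 * (Real.sqrt (m (i + 1) : ℝ) - Real.sqrt (m i : ℝ)) := by
      intro i hi
      rw [Finset.mem_Icc] at hi
      rcases Nat.eq_zero_or_pos (m i) with h0 | hpos
      · -- m i = 0
        have hb : m (i + 1) ≤ 1 := hzero i hi.1 hi.2 h0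
        rw [h0]
        simp only [Nat.cast_zero, Real.sqrt_zero, sub_zero]
        rw [max_eq_right (by norm_num : (0:ℝ) ≤ 1), Real.sqrt_one, div_one]
        interval_cases h : m (i + 1) <;> simp [Real.sqrt_one] <;> norm_num
      · -- m i ≥ 1
        have hb : m (i + 1) ≤ 2 * m i := hdouble i hi.1 hi.2 hpos
        have ha1 : (1 : ℝ) ≤ (m i : ℝ) := by exact_mod_cast hpos
        have hmax : max ((m i : ℝ)) 1 = (m i : ℝ) := max_eq_left ha1
        rw [hmax]
        set x := Real.sqrt (m i : ℝ) with hx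
        set y := Real.sqrt (m (i + 1) : ℝ) with hy
        have hx2 : x * x = (m i : ℝ) := Real.mul_self_sqrt (by positivity)
        have hy2 : y * y = (m (i + 1) : ℝ) := Real.mul_self_sqrt (by positivity)
        have hx1 : (1 : ℝ) ≤ x := by
          rw [hx, show (1:ℝ) = Real.sqrt 1 by simp]
          exact Real.sqrt_le_sqrt ha1
        have hxy : x ≤ y := Real.sqrt_le_sqrt (by exact_mod_cast hmono i)
        have hb' : (m (i + 1) : ℝ) ≤ 2 * (m i : ℝ) := by exact_mod_cast hb
        have hy3x : y ≤ 3 * x := by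
          have : (m (i + 1) : ℝ) ≤ 9 * (m i : ℝ) := by linarith [ha1]
          calc y ≤ Real.sqrt (9 * (m i : ℝ)) := Real.sqrt_le_sqrt this
            _ = 3 * x := by
                rw [show (9 : ℝ) * (m i : ℝ) = 3 ^ 2 * (m i : ℝ) by norm_num,
                  Real.sqrt_mul (by positivity), Real.sqrt_sq (by norm_num)]
        have hxpos : 0 < x := lt_of_lt_of_le one_pos hx1
        rw [div_le_iff₀ hxpos]
        nlinarith [mul_nonneg (sub_nonneg.2 hxy) (sub_nonneg.2 hy3x)]
    calc ∑ i ∈ Finset.Icc 1 N, ((m (i + 1) : ℝ) - (m i : ℝ)) / Real.sqrt (max (m i : ℝ) 1)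
        ≤ ∑ i ∈ Finset.Icc 1 N, 4 * (Real.sqrt (m (i + 1) : ℝ) - Real.sqrt (m i : ℝ)) :=
          Finset.sum_le_sum key
      _ = 4 * (Real.sqrt (m (N + 1) : ℝ) - Real.sqrt (m 1 : ℝ)) := by
          rw [← Finset.mul_sum, telescope_Icc (fun i => Real.sqrt (m i : ℝ)) N]
      _ = 4 * Real.sqrt (m (N + 1) : ℝ) := by rw [h1]; simp
      _ ≤ 2 * (2 * Real.sqrt ((m (N + 1) : ℝ)) + 1) := by ring_nf; nlinarith [Real.sqrt_nonneg ((m (N+1)) : ℝ)]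
  · have : Real.sqrt ((m (N + 1) : ℝ)) ≤ Real.sqrt (T : ℝ) :=
      Real.sqrt_le_sqrt (by exact_mod_cast hT)
    linarith
end

section
/- Let P₁ and P₂ be two layered transition functions on the same layered state space, π a policy, and q₁ = q^{P₁,π}, q₂ = q^{P₂,π} the corresponding occupancy measures. Then for every state s in layer k(s): q₁(s) − q₂(s) = Σ_{k=0}^{k(s)−1} Σ_{u ∈ S_k} Σ_{v ∈ A} Σ_{w ∈ S_{k+1}} q₁(u,v)·(P₁(w|u,v) − P₂(w|u,v))·q₂(s|w), where q₂(s|w) is the conditional probability of reaching s from w under π and P₂ (and symmetrically with the roles of q₁, q₂ exchanged on the right-hand side). -/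
open Finset

/-- Backward recursion for conditional occupancy. -/
theorem c_backward
    (L : ℕ) (S : ℕ → Type) [∀ k, Fintype (S k)] [∀ k, DecidableEq (S k)]
    (A : Type) [Fintype A]
    (P : ∀ k, S k → A → S (k + 1) → ℝ)
    (pol : ∀ k, S k → A → ℝ)
    (c : ∀ k k', S k → S k' → ℝ)
    (hcbase : ∀ k (w s : S k), c k k w s = if w = s then 1 else 0)
    (hcrec : ∀ k k', k ≤ k' → k' < L → ∀ (w : S k) (s : S (k' + 1)),
      c k (k' + 1) w s = ∑ u : S k', c k k' w u * ∑ v : A, pol k' u v * P k' u v s) :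
    ∀ k K, k < K → K ≤ L → ∀ (w : S k) (s : S K),
      c k K w s = ∑ w' : S (k + 1), (∑ v : A, pol k w v * P k w v w') * c (k + 1) K w' s := by
  intro k K hk
  induction K, hk using Nat.le_induction with
  | base =>
    intro hL w s
    rw [hcrec k k le_rfl (by omega) w s]
    simp [hcbase, ite_mul]
  | succ K hK ih =>
    intro hL w s
    rw [hcrec k K (by omega) (by omega) w s]
    have hrw : ∀ u : S K, c k K w u = ∑ w' : S (k + 1),
        (∑ v : A, pol k w v * P k w v w') * c (k + 1) K w' u :=
      fun u => ih (by omega) w u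
    calc ∑ u : S K, c k K w u * ∑ v : A, pol K u v * P K u v s
        = ∑ u : S K, ∑ w' : S (k + 1),
            (∑ v : A, pol k w v * P k w v w') * c (k + 1) K w' u
              * ∑ v : A, pol K u v * P K u v s := by
          refine Finset.sum_congr rfl fun u _ => ?_
          rw [hrw u, Finset.sum_mul]
      _ = ∑ w' : S (k + 1), (∑ v : A, pol k w v * P k w v w')
            * ∑ u : S K, c (k + 1) K w' u * ∑ v : A, pol K u v * P K u v s := by
          rw [Finset.sum_comm]
          refine Finset.sum_congr rfl fun w' _ => ?_
          rw [Finset.mul_sum]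
          exact Finset.sum_congr rfl fun u _ => by ring
      _ = ∑ w' : S (k + 1), (∑ v : A, pol k w v * P k w v w') * c (k + 1) (K + 1) w' s := by
          refine Finset.sum_congr rfl fun w' _ => ?_
          rw [hcrec (k + 1) K (by omega) (by omega) w' s]

/-- Propagation: occupancy equals conditional occupancy from `s0`. -/
theorem q_eq_c
    (L : ℕ) (S : ℕ → Type) [∀ k, Fintype (S k)] [∀ k, DecidableEq (S k)]
    (A : Type) [Fintype A]
    (P : ∀ k, S k → A → S (k + 1) → ℝ)
    (s0 : S 0)
    (pol : ∀ k, S k → A → ℝ)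
    (q : ∀ k, S k → ℝ)
    (hq0 : ∀ s : S 0, q 0 s = if s = s0 then 1 else 0)
    (hqrec : ∀ k, k < L → ∀ s' : S (k + 1),
      q (k + 1) s' = ∑ u : S k, ∑ v : A, q k u * pol k u v * P k u v s')
    (c : ∀ k k', S k → S k' → ℝ)
    (hcbase : ∀ k (w s : S k), c k k w s = if w = s then 1 else 0)
    (hcrec : ∀ k k', k ≤ k' → k' < L → ∀ (w : S k) (s : S (k' + 1)),
      c k (k' + 1) w s = ∑ u : S k', c k k' w u * ∑ v : A, pol k' u v * P k' u v s) :
    ∀ K, K ≤ L → ∀ s : S K, q K s = c 0 K s0 s := by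
  intro K
  induction K with
  | zero =>
    intro _ s
    rw [hq0, hcbase]
    simp [eq_comm]
  | succ K ih =>
    intro hL s
    rw [hqrec K (by omega) s, hcrec 0 K (by omega) (by omega) s0 s]
    refine Finset.sum_congr rfl fun u _ => ?_
    rw [← ih (by omega) u, Finset.mul_sum]
    exact Finset.sum_congr rfl fun v _ => by ring

theorem one_sided
    (L : ℕ) (S : ℕ → Type) [∀ k, Fintype (S k)] [∀ k, DecidableEq (S k)]
    (A : Type) [Fintype A]
    (Pa Pb : ∀ k, S k → A → S (k + 1) → ℝ)
    (s0 : S 0)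
    (pol : ∀ k, S k → A → ℝ)
    (qa : ∀ k, S k → ℝ)
    (hqa0 : ∀ s : S 0, qa 0 s = if s = s0 then 1 else 0)
    (hqarec : ∀ k, k < L → ∀ s' : S (k + 1),
      qa (k + 1) s' = ∑ u : S k, ∑ v : A, qa k u * pol k u v * Pa k u v s')
    (cb : ∀ k k', S k → S k' → ℝ)
    (hcbbase : ∀ k (w s : S k), cb k k w s = if w = s then 1 else 0)
    (hcbrec : ∀ k k', k ≤ k' → k' < L → ∀ (w : S k) (s : S (k' + 1)),
      cb k (k' + 1) w s = ∑ u : S k', cb k k' w u * ∑ v : A, pol k' u v * Pb k' u v s) :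
    ∀ K, K ≤ L → ∀ s : S K,
      qa K s - cb 0 K s0 s
        = ∑ k ∈ Finset.range K, ∑ u : S k, ∑ v : A, ∑ w' : S (k + 1),
            qa k u * pol k u v * (Pa k u v w' - Pb k u v w') * cb (k + 1) K w' s := by
  intro K hKL s
  set f : ℕ → ℝ := fun k => ∑ w : S k, qa k w * cb k K w s with hf
  have hfK : f K = qa K s := by
    simp only [hf]
    simp [hcbbase, mul_ite]
  have hf0 : f 0 = cb 0 K s0 s := by
    simp only [hf]
    simp [hqa0, ite_mul]
  have hstep : ∀ k ∈ Finset.range K,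
      f (k + 1) - f k = ∑ u : S k, ∑ v : A, ∑ w' : S (k + 1),
        qa k u * pol k u v * (Pa k u v w' - Pb k u v w') * cb (k + 1) K w' s := by
    intro k hk
    rw [Finset.mem_range] at hk
    have h1 : f (k + 1) = ∑ u : S k, ∑ v : A, ∑ w' : S (k + 1),
        qa k u * pol k u v * Pa k u v w' * cb (k + 1) K w' s := by
      simp only [hf]
      have hw : ∀ w : S (k + 1), qa (k + 1) w * cb (k + 1) K w s
          = ∑ u : S k, ∑ v : A, qa k u * pol k u v * Pa k u v w * cb (k + 1) K w s := by
        intro w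
        rw [hqarec k (by omega) w, Finset.sum_mul]
        exact Finset.sum_congr rfl fun u _ => by rw [Finset.sum_mul]
      rw [Finset.sum_congr rfl fun w _ => hw w, Finset.sum_comm]
      exact Finset.sum_congr rfl fun u _ => Finset.sum_comm
    have h2 : f k = ∑ u : S k, ∑ v : A, ∑ w' : S (k + 1),
        qa k u * pol k u v * Pb k u v w' * cb (k + 1) K w' s := by
      simp only [hf]
      refine Finset.sum_congr rfl fun u _ => ?_
      have hw : ∀ w' : S (k + 1),
          qa k u * ((∑ v : A, pol k u v * Pb k u v w') * cb (k + 1) K w' s)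
          = ∑ v : A, qa k u * pol k u v * Pb k u v w' * cb (k + 1) K w' s := by
        intro w'
        rw [Finset.sum_mul, Finset.mul_sum]
        exact Finset.sum_congr rfl fun v _ => by ring
      rw [c_backward L S A Pb pol cb hcbbase hcbrec k K hk hKL u s, Finset.mul_sum,
        Finset.sum_congr rfl fun w' _ => hw w', Finset.sum_comm]
    rw [h1, h2, ← Finset.sum_sub_distrib]
    refine Finset.sum_congr rfl fun u _ => ?_
    rw [← Finset.sum_sub_distrib]
    refine Finset.sum_congr rfl fun v _ => ?_
    rw [← Finset.sum_sub_distrib]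
    exact Finset.sum_congr rfl fun w' _ => by ring
  rw [← hfK, ← hf0, ← Finset.sum_range_sub f K]
  exact Finset.sum_congr rfl hstep

/-- **Occupancy measure difference.** For two layered transitions `P1, P2` and a
policy `pol`, with state occupancies `q1 = q^{P1,pol}`, `q2 = q^{P2,pol}` and
conditional occupancies `c1(s|w)` (under `P1`) and `c2(s|w)` (under `P2`), for every
state `s` in layer `K`:
`q1(s) − q2(s) = Σ_{k<K} Σ_{u,v,w} q1(u,v)(P1(w|u,v) − P2(w|u,v)) c2(s|w)`
and symmetrically with the roles of `q1, q2` (and `c1, c2`) exchanged on the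
right-hand side. -/
theorem occupancy_measure_difference
    (L : ℕ) (S : ℕ → Type) [∀ k, Fintype (S k)] [∀ k, DecidableEq (S k)]
    (A : Type) [Fintype A]
    (P1 P2 : ∀ k, S k → A → S (k + 1) → ℝ)
    (hP1nn : ∀ k (s : S k) (a : A) (s' : S (k + 1)), 0 ≤ P1 k s a s')
    (hP1sum : ∀ k (s : S k) (a : A), ∑ s' : S (k + 1), P1 k s a s' = 1)
    (hP2nn : ∀ k (s : S k) (a : A) (s' : S (k + 1)), 0 ≤ P2 k s a s')
    (hP2sum : ∀ k (s : S k) (a : A), ∑ s' : S (k + 1), P2 k s a s' = 1)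
    (s0 : S 0)
    (pol : ∀ k, S k → A → ℝ)
    (hpolnn : ∀ k (s : S k) (a : A), 0 ≤ pol k s a)
    (hpolsum : ∀ k (s : S k), ∑ a : A, pol k s a = 1)
    (q1 q2 : ∀ k, S k → ℝ)
    (hq1_0 : ∀ s : S 0, q1 0 s = if s = s0 then 1 else 0)
    (hq2_0 : ∀ s : S 0, q2 0 s = if s = s0 then 1 else 0)
    (hq1rec : ∀ k, k < L → ∀ s' : S (k + 1),
      q1 (k + 1) s' = ∑ u : S k, ∑ v : A, q1 k u * pol k u v * P1 k u v s')
    (hq2rec : ∀ k, k < L → ∀ s' : S (k + 1),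
      q2 (k + 1) s' = ∑ u : S k, ∑ v : A, q2 k u * pol k u v * P2 k u v s')
    (c1 c2 : ∀ k k', S k → S k' → ℝ)
    (hc1base : ∀ k (w s : S k), c1 k k w s = if w = s then 1 else 0)
    (hc2base : ∀ k (w s : S k), c2 k k w s = if w = s then 1 else 0)
    (hc1rec : ∀ k k', k ≤ k' → k' < L → ∀ (w : S k) (s : S (k' + 1)),
      c1 k (k' + 1) w s = ∑ u : S k', c1 k k' w u * ∑ v : A, pol k' u v * P1 k' u v s)
    (hc2rec : ∀ k k', k ≤ k' → k' < L → ∀ (w : S k) (s : S (k' + 1)),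
      c2 k (k' + 1) w s = ∑ u : S k', c2 k k' w u * ∑ v : A, pol k' u v * P2 k' u v s) :
    ∀ K, K ≤ L → ∀ s : S K,
      (q1 K s - q2 K s
          = ∑ k ∈ Finset.range K, ∑ u : S k, ∑ v : A, ∑ w' : S (k + 1),
              q1 k u * pol k u v * (P1 k u v w' - P2 k u v w') * c2 (k + 1) K w' s)
        ∧ q1 K s - q2 K s
          = ∑ k ∈ Finset.range K, ∑ u : S k, ∑ v : A, ∑ w' : S (k + 1),
              q2 k u * pol k u v * (P1 k u v w' - P2 k u v w') * c1 (k + 1) K w' s := by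
  intro K hK s
  constructor
  · have h := one_sided L S A P1 P2 s0 pol q1 hq1_0 hq1rec c2 hc2base hc2rec K hK s
    rwa [← q_eq_c L S A P2 s0 pol q2 hq2_0 hq2rec c2 hc2base hc2rec K hK s] at h
  · have h := one_sided L S A P2 P1 s0 pol q2 hq2_0 hq2rec c1 hc1base hc1rec K hK s
    rw [← q_eq_c L S A P1 s0 pol q1 hq1_0 hq1rec c1 hc1base hc1rec K hK s] at h
    have h' : q1 K s - q2 K s = -(q2 K s - q1 K s) := by ring
    rw [h', h, ← Finset.sum_neg_distrib]
    refine Finset.sum_congr rfl fun k _ => ?_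
    rw [← Finset.sum_neg_distrib]
    refine Finset.sum_congr rfl fun u _ => ?_
    rw [← Finset.sum_neg_distrib]
    refine Finset.sum_congr rfl fun v _ => ?_
    rw [← Finset.sum_neg_distrib]
    exact Finset.sum_congr rfl fun w' _ => by ring
end

section
/- In a layered episodic MDP, for any policy π and any deterministic policy π⋆ : S → A, and for each layer k: Σ_{s ∈ S_k} Σ_{a = π⋆(s)} (q_π(s,a) − q⋆_π(s,a)) ≤ Σ_{s ≠ s_L} Σ_{a ≠ π⋆(s)} q_π(s,a), where q_π is the occupancy measure of π under the true transition P, and q⋆_π(s,a) is the probability under π of reaching (s,a) via a trajectory that followed π⋆'s actions at every earlier layer. -/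
open Finset

/-- In a layered episodic MDP, for any policy `pol` and deterministic policy `pstar`,
and for each layer `K < L`:
`Σ_{s ∈ S K} (q(s, π⋆(s)) − q⋆(s, π⋆(s))) ≤ Σ_{s ≠ s_L} Σ_{a ≠ π⋆(s)} q(s,a)`,
where `q` is the occupancy measure of `pol` under the true transition `P`, and
`q⋆(s,a) = pol(a|s) · Pr[reach s having played π⋆'s action at every earlier layer]`
(the reaching probability `pr` being given by the forward recursion along `π⋆`). -/
theorem opt_action_occupancy_bound
    (L : ℕ) (S : ℕ → Type) [∀ k, Fintype (S k)] [DecidableEq (S 0)]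
    (A : Type) [Fintype A] [DecidableEq A]
    (P : ∀ k, S k → A → S (k + 1) → ℝ)
    (hPnn : ∀ k (s : S k) (a : A) (s' : S (k + 1)), 0 ≤ P k s a s')
    (hPsum : ∀ k (s : S k) (a : A), ∑ s' : S (k + 1), P k s a s' = 1)
    (s0 : S 0)
    (pol : ∀ k, S k → A → ℝ)
    (hpolnn : ∀ k (s : S k) (a : A), 0 ≤ pol k s a)
    (hpolsum : ∀ k (s : S k), ∑ a : A, pol k s a = 1)
    (pstar : ∀ k, S k → A)
    (q : ∀ k, S k → A → ℝ)
    (hq0 : ∀ (s : S 0) (a : A), q 0 s a = (if s = s0 then 1 else 0) * pol 0 s a)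
    (hqrec : ∀ k, k < L → ∀ (s' : S (k + 1)) (a' : A),
      q (k + 1) s' a' = pol (k + 1) s' a' * ∑ s : S k, ∑ a : A, q k s a * P k s a s')
    (pr : ∀ k, S k → ℝ)
    (hpr0 : ∀ s : S 0, pr 0 s = if s = s0 then 1 else 0)
    (hprrec : ∀ k, k < L → ∀ s' : S (k + 1),
      pr (k + 1) s' = ∑ u : S k, pr k u * pol k u (pstar k u) * P k u (pstar k u) s')
    (qstar : ∀ k, S k → A → ℝ)
    (hqstar : ∀ k (s : S k) (a : A), qstar k s a = pol k s a * pr k s) :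
    ∀ K, K < L →
      ∑ s : S K, (q K s (pstar K s) - qstar K s (pstar K s))
        ≤ ∑ k ∈ Finset.range L, ∑ s : S k, ∑ a ∈ Finset.univ.erase (pstar k s),
            q k s a := by
  have key : ∀ k, k ≤ L →
      (∀ (s : S k) (a : A), 0 ≤ q k s a) ∧
      (∀ (s : S k) (a : A), q k s a = pol k s a * ∑ a' : A, q k s a') ∧
      (∀ s : S k, pr k s ≤ ∑ a : A, q k s a) ∧
      (∑ s : S k, ((∑ a : A, q k s a) - pr k s)
        ≤ ∑ j ∈ Finset.range k, ∑ s : S j, ∑ a ∈ Finset.univ.erase (pstar j s), q j s a) := by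
    intro k
    induction k with
    | zero =>
      intro _
      have hm : ∀ s : S 0, ∑ a : A, q 0 s a = (if s = s0 then 1 else 0) := by
        intro s
        simp only [hq0, ← Finset.mul_sum, hpolsum, mul_one]
      refine ⟨fun s a => ?_, fun s a => ?_, fun s => ?_, ?_⟩
      · rw [hq0]
        exact mul_nonneg (by split_ifs <;> norm_num) (hpolnn 0 s a)
      · rw [hq0, hm, mul_comm]
      · rw [hm, hpr0]
      · simp [hm, hpr0]
    | succ k ih =>
      intro hk1
      have hkL : k < L := hk1
      obtain ⟨ihnn, ihfac, ihpr, ihsum⟩ := ih hkL.le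
      have hpolle : ∀ (j : ℕ) (s : S j) (a : A), pol j s a ≤ 1 := by
        intro j s a
        rw [← hpolsum j s]
        exact Finset.single_le_sum (fun a _ => hpolnn j s a) (Finset.mem_univ a)
      have hm : ∀ s' : S (k+1), ∑ a' : A, q (k+1) s' a'
          = ∑ u : S k, ∑ a : A, q k u a * P k u a s' := by
        intro s'
        simp only [hqrec k hkL, ← Finset.sum_mul, hpolsum, one_mul]
      have hqstarle : ∀ u : S k,
          pr k u * pol k u (pstar k u) ≤ q k u (pstar k u) := by
        intro u
        rw [ihfac u (pstar k u), mul_comm (pol k u (pstar k u))]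
        exact mul_le_mul_of_nonneg_right (ihpr u) (hpolnn k u (pstar k u))
      refine ⟨fun s' a' => ?_, fun s' a' => ?_, fun s' => ?_, ?_⟩
      · rw [hqrec k hkL]
        exact mul_nonneg (hpolnn _ s' a')
          (Finset.sum_nonneg fun u _ => Finset.sum_nonneg fun a _ =>
            mul_nonneg (ihnn u a) (hPnn k u a s'))
      · rw [hqrec k hkL s' a', hm s']
      · rw [hm s', hprrec k hkL s']
        calc ∑ u : S k, pr k u * pol k u (pstar k u) * P k u (pstar k u) s'
            ≤ ∑ u : S k, q k u (pstar k u) * P k u (pstar k u) s' :=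
              Finset.sum_le_sum fun u _ =>
                mul_le_mul_of_nonneg_right (hqstarle u) (hPnn k u (pstar k u) s')
          _ ≤ ∑ u : S k, ∑ a : A, q k u a * P k u a s' :=
              Finset.sum_le_sum fun u _ =>
                Finset.single_le_sum
                  (fun a _ => mul_nonneg (ihnn u a) (hPnn k u a s'))
                  (Finset.mem_univ (pstar k u))
      · have hsumX : ∑ s' : S (k+1), ∑ a : A, q (k+1) s' a
            = ∑ u : S k, ∑ a : A, q k u a := by
          simp only [hm]
          rw [Finset.sum_comm]
          refine Finset.sum_congr rfl fun u _ => ?_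
          rw [Finset.sum_comm]
          simp only [← Finset.mul_sum, hPsum, mul_one]
        have hsumpr : ∑ s' : S (k+1), pr (k+1) s'
            = ∑ u : S k, pr k u * pol k u (pstar k u) := by
          simp only [hprrec k hkL]
          rw [Finset.sum_comm]
          refine Finset.sum_congr rfl fun u _ => ?_
          rw [← Finset.mul_sum, hPsum, mul_one]
        rw [Finset.sum_sub_distrib, hsumX, hsumpr, Finset.sum_range_succ]
        have hsplit : ∀ u : S k, ∑ a : A, q k u a
            = q k u (pstar k u) + ∑ a ∈ Finset.univ.erase (pstar k u), q k u a := by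
          intro u
          exact (Finset.add_sum_erase Finset.univ (q k u) (Finset.mem_univ _)).symm
        have hkey : ∑ u : S k, (q k u (pstar k u) - pr k u * pol k u (pstar k u))
            ≤ ∑ u : S k, ((∑ a : A, q k u a) - pr k u) := by
          refine Finset.sum_le_sum fun u _ => ?_
          rw [ihfac u (pstar k u)]
          have h1 : pr k u ≤ ∑ a : A, q k u a := ihpr u
          have h2 : pol k u (pstar k u) ≤ 1 := hpolle k u (pstar k u)
          have h3 : 0 ≤ pol k u (pstar k u) := hpolnn k u (pstar k u)
          nlinarith [h1, h2, h3]
        calc (∑ u : S k, ∑ a : A, q k u a) - ∑ u : S k, pr k u * pol k u (pstar k u)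
            = ∑ u : S k, (q k u (pstar k u) - pr k u * pol k u (pstar k u))
              + ∑ u : S k, ∑ a ∈ Finset.univ.erase (pstar k u), q k u a := by
              have htot : ∑ u : S k, ∑ a : A, q k u a
                  = (∑ u : S k, q k u (pstar k u))
                    + ∑ u : S k, ∑ a ∈ Finset.univ.erase (pstar k u), q k u a := by
                rw [← Finset.sum_add_distrib]
                exact Finset.sum_congr rfl fun u _ => hsplit u
              rw [htot, Finset.sum_sub_distrib]
              ring
          _ ≤ ∑ u : S k, ((∑ a : A, q k u a) - pr k u)
              + ∑ u : S k, ∑ a ∈ Finset.univ.erase (pstar k u), q k u a := by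
              exact add_le_add hkey le_rfl
          _ ≤ (∑ j ∈ Finset.range k, ∑ s : S j, ∑ a ∈ Finset.univ.erase (pstar j s), q j s a)
              + ∑ u : S k, ∑ a ∈ Finset.univ.erase (pstar k u), q k u a :=
              add_le_add ihsum le_rfl
  intro K hK
  obtain ⟨Knn, Kfac, Kpr, Ksum⟩ := key K hK.le
  have step1 : ∑ s : S K, (q K s (pstar K s) - qstar K s (pstar K s))
      ≤ ∑ s : S K, ((∑ a : A, q K s a) - pr K s) := by
    refine Finset.sum_le_sum fun s _ => ?_
    rw [hqstar, Kfac s (pstar K s)]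
    have h1 : pr K s ≤ ∑ a : A, q K s a := Kpr s
    have h2 : pol K s (pstar K s) ≤ 1 := by
      rw [← hpolsum K s]
      exact Finset.single_le_sum (fun a _ => hpolnn K s a) (Finset.mem_univ _)
    have h3 : 0 ≤ pol K s (pstar K s) := hpolnn K s (pstar K s)
    nlinarith [h1, h2, h3]
  refine step1.trans (Ksum.trans ?_)
  refine Finset.sum_le_sum_of_subset_of_nonneg (Finset.range_subset_range.2 hK.le) ?_
  intro j hj _
  have hjL : j < L := Finset.mem_range.1 hj
  obtain ⟨jnn, -, -, -⟩ := key j hjL.le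
  exact Finset.sum_nonneg fun s _ => Finset.sum_nonneg fun a _ => jnn s a
end
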